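/- There exists a C^∞-smooth function g : (0,1) → ℝ satisfying: (i) g(t) = −2n for all t in the closed interval [ (1/(n+1))(1 + 1/(3n)), (1/(n+1))(1 + 2/(3n)) ], for every integer n ≥ 4; (ii) there exist constants c₁, c₂ > 0 such that −c₁/t ≤ g(t) ≤ −c₂/t for all t ∈ (0,1); (iii) for each k ∈ ℕ there exists a constant C(k) > 0, depending only on k, such that |g^{(k)}(t)| ≤ C(k)/t^{3k+1} for all t ∈ (0,1). -/

import Mathlib

open Set Topology Filter
noncomputable section

def rr (n : ℕ) : ℝ := (1 / ((n:ℝ)+1)) * (1 + 2 / (3*(n:ℝ)))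
def ll (n : ℕ) : ℝ := (1 / ((n:ℝ)+1)) * (1 + 1 / (3*(n:ℝ)))

lemma one_le_cast {n : ℕ} (hn : 1 ≤ n) : (1:ℝ) ≤ (n:ℝ) := by exact_mod_cast hn

lemma rr_eq {n : ℕ} (hn : 1 ≤ n) : rr n = (3*(n:ℝ)+2)/(3*(n:ℝ)*((n:ℝ)+1)) := by
  have h := one_le_cast hn
  unfold rr; rw [div_mul_eq_mul_div, div_eq_div_iff (by nlinarith) (by nlinarith)]; field_simp

lemma ll_eq {n : ℕ} (hn : 1 ≤ n) : ll n = (3*(n:ℝ)+1)/(3*(n:ℝ)*((n:ℝ)+1)) := by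
  have h := one_le_cast hn
  unfold ll; rw [div_mul_eq_mul_div, div_eq_div_iff (by nlinarith) (by nlinarith)]; field_simp

lemma rr_pos {n : ℕ} (hn : 1 ≤ n) : 0 < rr n := by
  have h := one_le_cast hn
  rw [rr_eq hn]; positivity

lemma ll_pos {n : ℕ} (hn : 1 ≤ n) : 0 < ll n := by
  have h := one_le_cast hn
  rw [ll_eq hn]; positivity

lemma one_div_le_rr {n : ℕ} (hn : 1 ≤ n) : 1/((n:ℝ)+1) ≤ rr n := by
  have h := one_le_cast hn
  rw [rr_eq hn, div_le_div_iff₀ (by nlinarith) (by nlinarith)]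
  nlinarith

lemma one_div_le_ll {n : ℕ} (hn : 1 ≤ n) : 1/((n:ℝ)+1) ≤ ll n := by
  have h := one_le_cast hn
  rw [ll_eq hn, div_le_div_iff₀ (by nlinarith) (by nlinarith)]
  nlinarith

lemma rr_le {n : ℕ} (hn : 1 ≤ n) : rr n ≤ 2/((n:ℝ)+1) := by
  have h := one_le_cast hn
  rw [rr_eq hn, div_le_div_iff₀ (by nlinarith) (by nlinarith)]
  nlinarith

lemma ll_lt_rr {n : ℕ} (hn : 1 ≤ n) : ll n < rr n := by
  have h := one_le_cast hn
  rw [rr_eq hn, ll_eq hn, div_lt_div_iff₀ (by nlinarith) (by nlinarith)]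
  nlinarith

lemma d_eq {n : ℕ} (hn : 1 ≤ n) : ll n - rr (n+1) = 2/(3*(n:ℝ)*((n:ℝ)+2)) := by
  have h := one_le_cast hn
  rw [ll_eq hn, rr_eq (by omega : 1 ≤ n+1)]
  push_cast
  field_simp
  ring

lemma d_pos {n : ℕ} (hn : 1 ≤ n) : 0 < ll n - rr (n+1) := by
  have h := one_le_cast hn
  rw [d_eq hn]; positivity

lemma rr_succ_lt_ll {n : ℕ} (hn : 1 ≤ n) : rr (n+1) < ll n := by
  have := d_pos hn; linarith

lemma rr_succ_lt_rr {n : ℕ} (hn : 1 ≤ n) : rr (n+1) < rr n :=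
  (rr_succ_lt_ll hn).trans (ll_lt_rr hn)

lemma rr_anti {m n : ℕ} (hm : 1 ≤ m) (hmn : m ≤ n) : rr n ≤ rr m := by
  induction n, hmn using Nat.le_induction with
  | base => exact le_refl _
  | succ n hn ih => exact le_trans (rr_succ_lt_rr (by omega)).le ih

def GG (m : ℕ) (t : ℝ) : ℝ :=
  -(2*((m:ℝ)+1)) + 2 * Real.smoothTransition ((t - rr (m+1)) / (ll m - rr (m+1)))

open Classical in
def gg (t : ℝ) : ℝ := if h : ∃ m, rr (m+4) ≤ t then GG (Nat.find h + 3) t else 0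

lemma GG_smooth (m : ℕ) {n : ℕ∞} : ContDiff ℝ n (GG m) := by
  unfold GG
  exact contDiff_const.add (contDiff_const.mul
    (Real.smoothTransition.contDiff.comp ((contDiff_id.sub contDiff_const).div_const _)))

lemma GG_left {m : ℕ} (hm : 1 ≤ m) {t : ℝ} (ht : t ≤ rr (m+1)) :
    GG m t = -(2*((m:ℝ)+1)) := by
  unfold GG
  rw [Real.smoothTransition.zero_of_nonpos, mul_zero, add_zero]
  exact div_nonpos_of_nonpos_of_nonneg (by linarith) (d_pos hm).le

lemma GG_right {m : ℕ} (hm : 1 ≤ m) {t : ℝ} (ht : ll m ≤ t) :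
    GG m t = -(2*(m:ℝ)) := by
  unfold GG
  rw [Real.smoothTransition.one_of_one_le, mul_one]
  · ring
  · rw [le_div_iff₀ (d_pos hm), one_mul]; linarith

lemma GG_bounds {m : ℕ} (t : ℝ) :
    -(2*((m:ℝ)+1)) ≤ GG m t ∧ GG m t ≤ -(2*(m:ℝ)) := by
  have h1 := Real.smoothTransition.nonneg ((t - rr (m+1)) / (ll m - rr (m+1)))
  have h2 := Real.smoothTransition.le_one ((t - rr (m+1)) / (ll m - rr (m+1)))
  unfold GG
  constructor <;> nlinarith

lemma gg_exists {t : ℝ} (ht : 0 < t) : ∃ m : ℕ, rr (m+4) ≤ t := by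
  obtain ⟨m, hm⟩ := exists_nat_ge (2/t)
  refine ⟨m, le_trans (rr_le (by omega)) ?_⟩
  have h2 : (2:ℝ)/t ≤ m := hm
  rw [div_le_iff₀ ht] at h2
  rw [div_le_iff₀ (by positivity)]
  push_cast
  nlinarith

open Classical in
lemma gg_eq_GG {n : ℕ} (hn : 3 ≤ n) {t : ℝ} (h1 : rr (n+1) ≤ t)
    (h2 : n = 3 ∨ t < rr n) : gg t = GG n t := by
  have hex : ∃ m : ℕ, rr (m+4) ≤ t := ⟨n-3, by rw [show n-3+4 = n+1 by omega]; exact h1⟩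
  rw [gg, dif_pos hex]
  congr 1
  have hfind : Nat.find hex = n - 3 := by
    rw [Nat.find_eq_iff]
    constructor
    · rw [show n-3+4 = n+1 by omega]; exact h1
    · intro m hm
      have hn4 : 4 ≤ n := by omega
      rcases h2 with h2 | h2
      · omega
      · push_neg
        calc t < rr n := h2
        _ ≤ rr (m+4) := rr_anti (by omega) (by omega)
  omega

lemma gg_eq_top {t : ℝ} (h : rr 4 ≤ t) : gg t = GG 3 t :=
  gg_eq_GG le_rfl h (Or.inl rfl)

lemma gg_eq_mid {n : ℕ} (hn : 4 ≤ n) {t : ℝ} (h1 : rr (n+1) ≤ t) (h2 : t < rr n) :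
    gg t = GG n t := gg_eq_GG (by omega) h1 (Or.inr h2)

lemma gg_eq_B {n : ℕ} (hn : 3 ≤ n) {s : ℝ} (h1 : ll (n+1) < s) (h2 : s < ll n) :
    gg s = GG n s := by
  rcases lt_or_ge s (rr (n+1)) with h | h
  · -- use piece n+1, both are constant -(2(n+1))
    have e1 : gg s = GG (n+1) s :=
      gg_eq_mid (by omega) (le_of_lt (lt_of_le_of_lt (rr_succ_lt_ll (by omega)).le h1)) h
    rw [e1, GG_right (by omega) h1.le, GG_left (by omega) h.le]
    push_cast; ring
  · rcases Nat.eq_or_lt_of_le hn with h3 | h4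
    · subst h3; exact gg_eq_top h
    · exact gg_eq_mid (by omega) h (h2.trans_le (ll_lt_rr (by omega)).le)

/-- master local description of `gg` -/
lemma gg_key {t : ℝ} (ht : t ∈ Ioo (0:ℝ) 1) : ∃ m : ℕ, 3 ≤ m ∧
    gg =ᶠ[𝓝 t] GG m ∧ 1 ≤ t*((m:ℝ)+2) ∧ t*((m:ℝ)+1) ≤ 4 := by
  obtain ⟨ht0, ht1⟩ := ht
  have hex := gg_exists ht0
  classical
  set n := Nat.find hex + 3 with hn
  have h1 : rr (n+1) ≤ t := by
    have := Nat.find_spec hex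
    rwa [show Nat.find hex + 4 = n + 1 by omega] at this
  have hlow : 1 ≤ t*((n:ℝ)+2) := by
    have h2 : 1/((n:ℝ)+1+1) ≤ rr (n+1) := by
      have := one_div_le_rr (n := n+1) (by omega)
      push_cast at this ⊢; linarith
    have hp : (0:ℝ) < (n:ℝ)+2 := by positivity
    rw [div_le_iff₀ (by positivity)] at h2
    nlinarith
  refine ⟨n, by omega, ?_, hlow, ?_⟩
  · -- eventual equality
    rcases eq_or_lt_of_le h1 with he | hlt
    · -- t = rr (n+1) : junction, use B-interval
      have hmem : t ∈ Ioo (ll (n+1)) (ll n) := by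
        constructor
        · rw [← he]; exact ll_lt_rr (by omega)
        · rw [← he]; exact rr_succ_lt_ll (by omega)
      filter_upwards [isOpen_Ioo.mem_nhds hmem] with s hs
      exact gg_eq_B (by omega) hs.1 hs.2
    · rcases Nat.eq_zero_or_pos (Nat.find hex) with h0 | h0
      · -- top region
        have hn3 : n = 3 := by omega
        have hmem : t ∈ Ioi (rr 4) := by
          rw [hn3] at hlt; exact hlt
        filter_upwards [isOpen_Ioi.mem_nhds hmem] with s hs
        rw [hn3]; exact gg_eq_top (le_of_lt hs)
      · -- middle region
        have h2 : t < rr n := by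
          have := Nat.find_min hex (m := Nat.find hex - 1) (by omega)
          push_neg at this
          rwa [show Nat.find hex - 1 + 4 = n by omega] at this
        have hmem : t ∈ Ioo (rr (n+1)) (rr n) := ⟨hlt, h2⟩
        filter_upwards [isOpen_Ioo.mem_nhds hmem] with s hs
        exact gg_eq_mid (by omega) hs.1.le hs.2
  · -- upper bound t*(n+1) ≤ 4
    rcases Nat.eq_zero_or_pos (Nat.find hex) with h0 | h0
    · have hn3 : n = 3 := by omega
      rw [hn3]; push_cast; nlinarith
    · have h2 : t < rr n := by
        have := Nat.find_min hex (m := Nat.find hex - 1) (by omega)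
        push_neg at this
        rwa [show Nat.find hex - 1 + 4 = n by omega] at this
      have h3 : rr n ≤ 2/((n:ℝ)+1) := rr_le (by omega)
      have hp : (0:ℝ) < (n:ℝ)+1 := by positivity
      have h5 := (lt_div_iff₀ hp).mp (h2.trans_le h3)
      linarith

/-- plateau property (i) -/
lemma gg_plateau {n : ℕ} (hn : 4 ≤ n) {t : ℝ} (h1 : ll n ≤ t) (h2 : t ≤ rr n) :
    gg t = -(2*(n:ℝ)) := by
  rcases eq_or_lt_of_le h2 with he | hlt
  · -- t = rr n : use piece n-1
    have e1 : gg t = GG (n-1) t := by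
      apply gg_eq_B (by omega)
      · rw [show n-1+1 = n by omega, he]; exact ll_lt_rr (by omega)
      · rw [he, show (n:ℕ) = (n-1)+1 by omega]; exact rr_succ_lt_ll (by omega)
    rw [e1, GG_left (by omega) (by rw [show n-1+1 = n by omega, he])]
    have : ((n-1:ℕ):ℝ) = (n:ℝ) - 1 := by
      have : (1:ℝ) ≤ (n:ℝ) := one_le_cast (by omega)
      push_cast [Nat.cast_sub (by omega : 1 ≤ n)]; ring
    rw [this]; ring
  · have e1 : gg t = GG n t := by
      apply gg_eq_mid hn _ hlt
      exact le_trans (rr_succ_lt_ll (by omega)).le h1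
    rw [e1, GG_right (by omega) h1]

lemma gg_smooth : ContDiffOn ℝ (⊤ : ℕ∞) gg (Set.Ioo (0:ℝ) 1) := by
  intro x hx
  obtain ⟨m, _, hev, _, _⟩ := gg_key hx
  exact ((GG_smooth m).contDiffAt.congr_of_eventuallyEq hev).contDiffWithinAt

lemma iterate_deriv_zero : ∀ j : ℕ, deriv^[j] (fun _ : ℝ => (0:ℝ)) = fun _ => (0:ℝ)
  | 0 => rfl
  | (j+1) => by
    rw [Function.iterate_succ_apply, show deriv (fun _ : ℝ => (0:ℝ)) = fun _ => (0:ℝ) from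
      funext fun y => deriv_const y 0, iterate_deriv_zero j]

lemma iteratedDeriv_of_const (k : ℕ) (hk : 0 < k) (c : ℝ) (x : ℝ) :
    iteratedDeriv k (fun _ : ℝ => c) x = 0 := by
  obtain ⟨j, rfl⟩ := Nat.exists_eq_succ_of_ne_zero hk.ne'
  rw [iteratedDeriv_eq_iterate, Function.iterate_succ_apply,
    show deriv (fun _ : ℝ => c) = fun _ => (0:ℝ) from funext fun y => deriv_const y c,
    iterate_deriv_zero j]

lemma tau_deriv_bound (k : ℕ) : ∃ M : ℝ, 0 < M ∧
    ∀ x : ℝ, |iteratedDeriv k Real.smoothTransition x| ≤ M := by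
  have hcont : Continuous (iteratedDeriv k Real.smoothTransition) := by
    have h := Real.smoothTransition.contDiff (n := (k:ℕ∞))
    exact h.continuous_iteratedDeriv k (by exact_mod_cast le_rfl)
  obtain ⟨M0, hM0⟩ := (isCompact_Icc (a := (0:ℝ)) (b := 1)).exists_bound_of_continuousOn
    hcont.continuousOn
  refine ⟨max M0 1, lt_of_lt_of_le one_pos (le_max_right _ _), fun x => ?_⟩
  rcases le_or_gt x 0 with hx | hx
  · rcases lt_or_eq_of_le hx with hx' | rfl
    · have hev : Real.smoothTransition =ᶠ[𝓝 x] (fun _ => (0:ℝ)) := by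
        filter_upwards [isOpen_Iio.mem_nhds (show x ∈ Iio (0:ℝ) from hx')] with y hy
        exact Real.smoothTransition.zero_of_nonpos (le_of_lt hy)
      rw [hev.iteratedDeriv_eq]
      rcases Nat.eq_zero_or_pos k with rfl | hk
      · simpa using le_trans zero_le_one (le_max_right _ _)
      · rw [iteratedDeriv_of_const k hk]
        simpa using le_trans zero_le_one (le_max_right _ _)
    · exact le_trans (hM0 0 (by constructor <;> norm_num)) (le_max_left _ _)
  · rcases le_or_gt x 1 with hx1 | hx1
    · exact le_trans (hM0 x ⟨hx.le, hx1⟩) (le_max_left _ _)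
    · have hev : Real.smoothTransition =ᶠ[𝓝 x] (fun _ => (1:ℝ)) := by
        filter_upwards [isOpen_Ioi.mem_nhds (show x ∈ Ioi (1:ℝ) from hx1)] with y hy
        exact Real.smoothTransition.one_of_one_le (le_of_lt hy)
      rw [hev.iteratedDeriv_eq]
      rcases Nat.eq_zero_or_pos k with rfl | hk
      · simpa using le_max_right M0 1
      · rw [iteratedDeriv_of_const k hk]
        simpa using le_trans zero_le_one (le_max_right _ _)

lemma GG_iteratedDeriv {m : ℕ} (hm : 1 ≤ m) {k : ℕ} (hk : 0 < k) (t : ℝ) :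
    iteratedDeriv k (GG m) t =
      2 * (1/(ll m - rr (m+1)))^k *
        iteratedDeriv k Real.smoothTransition ((t - rr (m+1)) / (ll m - rr (m+1))) := by
  set d : ℝ := ll m - rr (m+1) with hd
  set a : ℝ := 1/d with ha
  set c : ℝ := rr (m+1) with hc
  have hdpos : 0 < d := d_pos hm
  have harg : ∀ z : ℝ, (z - c)/d = a * (z + (-c)) := by
    intro z; rw [ha, one_div, ← div_eq_inv_mul]; ring_nf
  have h1 : GG m = fun z => -(2*((m:ℝ)+1)) +
      (fun y => 2 * Real.smoothTransition (a*y)) (z + (-c)) := by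
    funext z
    show -(2*((m:ℝ)+1)) + 2 * Real.smoothTransition ((z - c)/d) = _
    rw [harg z]
  rw [h1]
  have h3 : iteratedDeriv k (fun z => -(2*((m:ℝ)+1)) +
        (fun y => 2 * Real.smoothTransition (a*y)) (z + (-c))) t
      = iteratedDeriv k (fun z => (fun y => 2 * Real.smoothTransition (a*y)) (z + (-c))) t := by
    rw [← iteratedDerivWithin_univ, ← iteratedDerivWithin_univ]
    exact iteratedDerivWithin_const_add hk _
  rw [h3, iteratedDeriv_comp_add_const k (fun y => 2 * Real.smoothTransition (a*y)) (-c)]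
  show iteratedDeriv k (fun y => 2 * Real.smoothTransition (a*y)) (t + (-c)) = _
  have h4 : iteratedDeriv k (fun y => 2 * Real.smoothTransition (a*y)) (t + (-c))
      = 2 * iteratedDeriv k (fun y => Real.smoothTransition (a*y)) (t + (-c)) := by
    rw [← iteratedDerivWithin_univ, ← iteratedDerivWithin_univ]
    exact iteratedDerivWithin_const_mul (mem_univ _) uniqueDiffOn_univ 2
      ((Real.smoothTransition.contDiff.comp (contDiff_const.mul contDiff_id)).contDiffWithinAt)
  rw [h4, iteratedDeriv_comp_const_mul Real.smoothTransition.contDiff a]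
  show 2 * (a ^ k * iteratedDeriv k Real.smoothTransition (a * (t + -c))) = _
  rw [← harg t]
  ring

lemma iteratedDerivWithin_of_isOpen' {f : ℝ → ℝ} {s : Set ℝ} (k : ℕ) (hs : IsOpen s)
    {x : ℝ} (hx : x ∈ s) : iteratedDerivWithin k f s x = iteratedDeriv k f x := by
  simp only [iteratedDerivWithin, iteratedDeriv, iteratedFDerivWithin_of_isOpen k hs hx]

theorem stmt_4' :
    ∃ g : ℝ → ℝ, ContDiffOn ℝ (⊤ : ℕ∞) g (Set.Ioo (0:ℝ) 1) ∧
      (∀ n : ℕ, 4 ≤ n →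
        ∀ t ∈ Set.Icc ((1 / ((n:ℝ)+1)) * (1 + 1 / (3*(n:ℝ)))) ((1 / ((n:ℝ)+1)) * (1 + 2 / (3*(n:ℝ)))),
          g t = -(2*(n:ℝ))) ∧
      (∃ c₁ : ℝ, 0 < c₁ ∧ ∃ c₂ : ℝ, 0 < c₂ ∧
        ∀ t ∈ Set.Ioo (0:ℝ) 1, -(c₁/t) ≤ g t ∧ g t ≤ -(c₂/t)) ∧
      (∀ k : ℕ, ∃ C : ℝ, 0 < C ∧
        ∀ t ∈ Set.Ioo (0:ℝ) 1, |iteratedDerivWithin k g (Set.Ioo (0:ℝ) 1) t| ≤ C / t ^ (3*k+1)) := by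
  refine ⟨gg, gg_smooth, ?_, ?_, ?_⟩
  · intro n hn t ht
    exact gg_plateau hn ht.1 ht.2
  · refine ⟨8, by norm_num, 1, by norm_num, fun t ht => ?_⟩
    obtain ⟨ht0, ht1⟩ := ht
    obtain ⟨m, hm3, hev, hlow, hup⟩ := gg_key ⟨ht0, ht1⟩
    have hgt : gg t = GG m t := hev.eq_of_nhds
    obtain ⟨hb1, hb2⟩ := GG_bounds (m := m) t
    have hm3' : (3:ℝ) ≤ (m:ℝ) := by exact_mod_cast hm3
    constructor
    · rw [hgt]
      have : 8/t ≥ 2*((m:ℝ)+1) := by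
        rw [ge_iff_le, le_div_iff₀ ht0]; nlinarith
      linarith
    · rw [hgt]
      have : 1/t ≤ 2*(m:ℝ) := by
        rw [div_le_iff₀ ht0]; nlinarith
      linarith
  · intro k
    obtain ⟨M, hM, hMb⟩ := tau_deriv_bound k
    refine ⟨(2*M + 8) * 96^k, by positivity, fun t ht => ?_⟩
    obtain ⟨ht0, ht1⟩ := ht
    obtain ⟨m, hm3, hev, hlow, hup⟩ := gg_key ⟨ht0, ht1⟩
    have hm3' : (3:ℝ) ≤ (m:ℝ) := by exact_mod_cast hm3
    rw [iteratedDerivWithin_of_isOpen' k isOpen_Ioo ⟨ht0, ht1⟩, hev.iteratedDeriv_eq k]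
    rcases Nat.eq_zero_or_pos k with rfl | hk
    · rw [iteratedDeriv_zero]
      obtain ⟨hb1, hb2⟩ := GG_bounds (m := m) t
      have h8 : 2*((m:ℝ)+1) ≤ 8/t := by rw [le_div_iff₀ ht0]; nlinarith
      have h80 : (0:ℝ) ≤ 8/t := by positivity
      have habs : |GG m t| ≤ 8/t := by
        rw [abs_le]; constructor <;> nlinarith
      calc |GG m t| ≤ 8/t := habs
      _ ≤ ((2*M+8) * 96^0)/t^(3*0+1) := by
          simp only [pow_zero, mul_one, Nat.mul_zero, Nat.zero_add, pow_one]
          gcongr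
          linarith
    · -- positive k
      set d : ℝ := ll m - rr (m+1) with hd
      have hdpos : 0 < d := d_pos (by omega)
      have haeq : 1/d = 3*(m:ℝ)*((m:ℝ)+2)/2 := by
        rw [hd, d_eq (by omega), one_div_div]
      have h8 : ((m:ℝ)+2)*t ≤ 8 := by nlinarith
      have ha_le : 1/d ≤ 96/t^2 := by
        rw [haeq, div_le_div_iff₀ (by norm_num) (by positivity)]
        nlinarith [mul_le_mul h8 h8 (by positivity) (by norm_num), sq_nonneg t]
      have hapos : 0 < 1/d := by positivity
      rw [GG_iteratedDeriv (by omega) hk t, abs_mul, abs_of_nonneg (by positivity)]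
      have hpow : (1/d)^k ≤ 96^k/t^(2*k) := by
        calc (1/d)^k ≤ (96/t^2)^k := pow_le_pow_left₀ hapos.le ha_le k
        _ = 96^k/t^(2*k) := by rw [div_pow, ← pow_mul, Nat.mul_comm]
      calc 2*(1/d)^k * |iteratedDeriv k Real.smoothTransition _|
          ≤ 2*(96^k/t^(2*k)) * M := by
            apply mul_le_mul _ (hMb _) (abs_nonneg _) (by positivity)
            nlinarith [pow_pos (show (0:ℝ) < 96/t^2 by positivity) k]
        _ = (2*M*96^k)/t^(2*k) := by ring
        _ ≤ ((2*M + 8) * 96^k)/t^(3*k+1) := by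
            apply div_le_div₀ (by positivity) (by nlinarith [pow_pos (show (0:ℝ)<96 by norm_num) k])
              (by positivity)
            exact pow_le_pow_of_le_one ht0.le ht1.le (by omega)


/-- There exists a `C^∞`-smooth function `g : (0,1) → ℝ` such that:
(i) `g ≡ -2n` on `[(1/(n+1))(1+1/(3n)), (1/(n+1))(1+2/(3n))]` for every `n ≥ 4`;
(ii) `g(t) ≈ -1/t` on `(0,1)`;
(iii) for each `k` there is `C(k) > 0` with `|g⁽ᵏ⁾(t)| ≤ C(k)/t^(3k+1)` on `(0,1)`. -/
theorem stmt_4 :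
    ∃ g : ℝ → ℝ, ContDiffOn ℝ (⊤ : ℕ∞) g (Set.Ioo (0:ℝ) 1) ∧
      (∀ n : ℕ, 4 ≤ n →
        ∀ t ∈ Set.Icc ((1 / ((n:ℝ)+1)) * (1 + 1 / (3*(n:ℝ)))) ((1 / ((n:ℝ)+1)) * (1 + 2 / (3*(n:ℝ)))),
          g t = -(2*(n:ℝ))) ∧
      (∃ c₁ : ℝ, 0 < c₁ ∧ ∃ c₂ : ℝ, 0 < c₂ ∧
        ∀ t ∈ Set.Ioo (0:ℝ) 1, -(c₁/t) ≤ g t ∧ g t ≤ -(c₂/t)) ∧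
      (∀ k : ℕ, ∃ C : ℝ, 0 < C ∧
        ∀ t ∈ Set.Ioo (0:ℝ) 1, |iteratedDerivWithin k g (Set.Ioo (0:ℝ) 1) t| ≤ C / t ^ (3*k+1)) := by
  exact stmt_4'
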